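/- Let u₁, ..., u_n be unit vectors in ℝ^N whose average satisfies |⟨u⟩| ≤ 1 − 2b for b ∈ (0, 1/2), and let B = b/(4 − 2b). Then there exist at least ⌊(B/2)·n⌋ pairwise disjoint pairs of indices (i_s, l_s) with i_s ≠ l_s such that ⟨u_{i_s}, u_{l_s}⟩ ≤ 1 − b for every s. -/

import Mathlib

open RealInnerProductSpace

lemma greedy_matching {N n : ℕ} (b : ℝ)
    (u : Fin n → EuclideanSpace ℝ (Fin N)) (S : Finset (Fin n)) :
    ∃ (P : List (Fin n × Fin n)) (T : Finset (Fin n)),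
      T ⊆ S ∧ S.card = 2 * P.length + T.card ∧
      (∀ pr ∈ P, pr.1 ∈ S ∧ pr.2 ∈ S ∧ pr.1 ≠ pr.2 ∧ ⟪u pr.1, u pr.2⟫ ≤ 1 - b) ∧
      List.Pairwise (fun a c => a.1 ≠ c.1 ∧ a.1 ≠ c.2 ∧ a.2 ≠ c.1 ∧ a.2 ≠ c.2) P ∧
      (∀ i ∈ T, ∀ j ∈ T, i ≠ j → 1 - b < ⟪u i, u j⟫) := by
  induction S using Finset.strongInduction with
  | _ S ih =>
    by_cases h : ∃ i ∈ S, ∃ l ∈ S, i ≠ l ∧ ⟪u i, u l⟫ ≤ 1 - b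
    · obtain ⟨i, hi, l, hl, hil, hg⟩ := h
      have h2sub : ({i, l} : Finset (Fin n)) ⊆ S := by
        intro x hx; simp at hx; rcases hx with rfl | rfl <;> assumption
      have hsub : S \ {i, l} ⊂ S := Finset.sdiff_ssubset h2sub (by simp)
      obtain ⟨P, T, hT, hcard, hP, hpw, hbad⟩ := ih _ hsub
      refine ⟨(i, l) :: P, T, hT.trans Finset.sdiff_subset, ?_, ?_, ?_, hbad⟩
      · have hc2 : ({i, l} : Finset (Fin n)).card = 2 := by
          rw [Finset.card_insert_of_notMem (by simp [hil]), Finset.card_singleton]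
        have hcd : (S \ {i, l}).card = S.card - 2 := by
          rw [Finset.card_sdiff_of_subset h2sub, hc2]
        have h2le : 2 ≤ S.card := hc2 ▸ Finset.card_le_card h2sub
        simp only [List.length_cons]
        omega
      · rintro pr hpr
        rcases List.mem_cons.mp hpr with rfl | hpr
        · exact ⟨hi, hl, hil, hg⟩
        · obtain ⟨h1, h2, h3, h4⟩ := hP pr hpr
          exact ⟨Finset.sdiff_subset h1, Finset.sdiff_subset h2, h3, h4⟩
      · refine List.Pairwise.cons ?_ hpw
        intro pr hpr
        obtain ⟨h1, h2, -, -⟩ := hP pr hpr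
        simp only [Finset.mem_sdiff, Finset.mem_insert, Finset.mem_singleton] at h1 h2
        push_neg at h1 h2
        exact ⟨(h1.2.1).symm, (h2.2.1).symm, (h1.2.2).symm, (h2.2.2).symm⟩
    · push_neg at h
      exact ⟨[], S, le_refl _, by simp, by simp, List.Pairwise.nil, fun i hi j hj hij => h i hi j hj hij⟩

lemma small_bad_set {N n : ℕ} (b : ℝ) (hb : 0 < b) (hb' : b < 1/2)
    (u : Fin n → EuclideanSpace ℝ (Fin N)) (hu : ∀ i, ‖u i‖ = 1)
    (hsum : ‖∑ i, u i‖ ≤ (1 - 2*b) * n)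
    (T : Finset (Fin n)) (hbad : ∀ i ∈ T, ∀ j ∈ T, i ≠ j → 1 - b < ⟪u i, u j⟫) :
    (T.card : ℝ) * (2 - b) ≤ (2 - 2*b) * n := by
  set k : ℝ := (T.card : ℝ) with hk
  have hk0 : 0 ≤ k := Nat.cast_nonneg _
  have h1b0 : (0:ℝ) ≤ 1 - b := by linarith
  set v := ∑ i ∈ T, u i with hv
  have hv2 : ‖v‖^2 = ∑ i ∈ T, ∑ j ∈ T, ⟪u i, u j⟫ := by
    rw [← real_inner_self_eq_norm_sq, hv, sum_inner]
    exact Finset.sum_congr rfl fun i _ => inner_sum _ _ _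
  -- lower bound for each row
  have hrow : ∀ i ∈ T, 1 + (k-1)*(1-b) ≤ ∑ j ∈ T, ⟪u i, u j⟫ := by
    intro i hi
    have hii : ⟪u i, u i⟫ = 1 := by
      rw [real_inner_self_eq_norm_sq, hu]; norm_num
    rw [← Finset.add_sum_erase T _ hi, hii]
    have hcle : ((T.erase i).card : ℝ) = k - 1 := by
      rw [Finset.card_erase_of_mem hi, hk]
      have : 1 ≤ T.card := Finset.card_pos.mpr ⟨i, hi⟩
      push_cast [Nat.cast_sub this]; ring
    have hterm : (T.erase i).card • (1 - b) ≤ ∑ j ∈ T.erase i, ⟪u i, u j⟫ := by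
      apply Finset.card_nsmul_le_sum
      intro j hj
      exact le_of_lt (hbad i hi j (Finset.mem_of_mem_erase hj)
        (Ne.symm (Finset.ne_of_mem_erase hj)))
    rw [nsmul_eq_mul, hcle] at hterm
    linarith
  have hlow : k * (1 + (k-1)*(1-b)) ≤ ‖v‖^2 := by
    rw [hv2]
    have := Finset.card_nsmul_le_sum T (fun i => ∑ j ∈ T, ⟪u i, u j⟫) (1 + (k-1)*(1-b)) hrow
    rw [nsmul_eq_mul] at this
    exact_mod_cast this
  have hk1b : (k*(1-b))^2 ≤ ‖v‖^2 := by
    nlinarith [mul_nonneg hk0 hk0, mul_nonneg (mul_nonneg hk0 hk0) (mul_nonneg hb.le h1b0),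
      mul_nonneg hk0 hb.le]
  have hvlow : k*(1-b) ≤ ‖v‖ := by
    have h0 : 0 ≤ k*(1-b) := mul_nonneg hk0 h1b0
    nlinarith [norm_nonneg v]
  have hkn : T.card ≤ n := by
    simpa using Finset.card_le_univ T
  have hw : ‖∑ i ∈ Tᶜ, u i‖ ≤ (n : ℝ) - k := by
    calc ‖∑ i ∈ Tᶜ, u i‖ ≤ ∑ i ∈ Tᶜ, ‖u i‖ := norm_sum_le _ _
    _ = (Tᶜ.card : ℝ) := by simp [hu]
    _ = (n:ℝ) - k := by
        rw [Finset.card_compl, Fintype.card_fin, Nat.cast_sub hkn, hk]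
  have hvw : ‖v‖ ≤ ‖∑ i, u i‖ + ‖∑ i ∈ Tᶜ, u i‖ := by
    have : v = (∑ i, u i) - ∑ i ∈ Tᶜ, u i :=
      (eq_sub_of_add_eq (Finset.sum_add_sum_compl T u))
    rw [this]
    exact norm_sub_le _ _
  linarith

theorem exists_disjoint_nonaligned_pairs
    (N n : ℕ) (hn : 0 < n) (b : ℝ) (hb : 0 < b) (hb' : b < 1/2)
    (u : Fin n → EuclideanSpace ℝ (Fin N)) (hu : ∀ i, ‖u i‖ = 1)
    (hz : ‖((n : ℝ))⁻¹ • ∑ i, u i‖ ≤ 1 - 2 * b) :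
    ∃ p : Fin ⌊(b / (4 - 2 * b)) / 2 * n⌋₊ → Fin n × Fin n,
      (∀ s, (p s).1 ≠ (p s).2) ∧
      (∀ s, ⟪u (p s).1, u (p s).2⟫ ≤ 1 - b) ∧
      (∀ r s, r ≠ s →
        ({(p r).1, (p r).2} : Set (Fin n)) ∩ {(p s).1, (p s).2} = ∅) := by
  have hn0 : (0:ℝ) < n := by exact_mod_cast hn
  have hsum : ‖∑ i, u i‖ ≤ (1 - 2*b) * n := by
    have h1 : ‖((n : ℝ))⁻¹ • ∑ i, u i‖ = (n:ℝ)⁻¹ * ‖∑ i, u i‖ := by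
      rw [norm_smul, Real.norm_eq_abs, abs_of_pos (by positivity)]
    rw [h1] at hz
    rw [inv_mul_le_iff₀ hn0] at hz
    linarith [hz]
  obtain ⟨P, T, hT, hcard, hP, hpw, hbad⟩ := greedy_matching b u (Finset.univ : Finset (Fin n))
  rw [Finset.card_univ, Fintype.card_fin] at hcard
  have hkbound := small_bad_set b hb hb' u hu hsum T hbad
  have h4b : (0:ℝ) < 4 - 2*b := by linarith
  have hm0 : (0:ℝ) ≤ (P.length : ℝ) := Nat.cast_nonneg _
  have hncast : (n:ℝ) = 2 * (P.length:ℝ) + (T.card:ℝ) := by exact_mod_cast hcard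
  have hBn : (b / (4 - 2*b)) / 2 * n ≤ (P.length : ℝ) := by
    rw [div_div, div_mul_eq_mul_div, div_le_iff₀ (by linarith)]
    nlinarith
  have hcm : ⌊(b / (4 - 2 * b)) / 2 * n⌋₊ ≤ P.length := by
    have hfl : (⌊(b / (4 - 2 * b)) / 2 * n⌋₊ : ℝ) ≤ (b / (4 - 2*b)) / 2 * n :=
      Nat.floor_le (by positivity)
    exact_mod_cast hfl.trans hBn
  have hdisj : ∀ (a c : Fin n × Fin n), a.1 ≠ c.1 → a.1 ≠ c.2 → a.2 ≠ c.1 → a.2 ≠ c.2 →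
      ({a.1, a.2} : Set (Fin n)) ∩ {c.1, c.2} = ∅ := by
    intro a c h1 h2 h3 h4
    ext x
    simp only [Set.mem_inter_iff, Set.mem_insert_iff, Set.mem_singleton_iff,
      Set.mem_empty_iff_false, iff_false, not_and]
    rintro (h5 | h5) <;> subst h5 <;> rintro (h6 | h6) <;> simp_all
  refine ⟨fun s => P.get ⟨s.1, lt_of_lt_of_le s.2 hcm⟩, ?_, ?_, ?_⟩
  · intro s
    exact (hP _ (P.get_mem _)).2.2.1
  · intro s
    exact (hP _ (P.get_mem _)).2.2.2
  · intro r s hrs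
    have hpw' := List.pairwise_iff_get.mp hpw
    have hvne : r.1 ≠ s.1 := fun h => hrs (Fin.ext h)
    rcases lt_or_gt_of_ne hvne with h | h
    · obtain ⟨h1, h2, h3, h4⟩ := hpw' ⟨r.1, lt_of_lt_of_le r.2 hcm⟩ ⟨s.1, lt_of_lt_of_le s.2 hcm⟩ h
      exact hdisj _ _ h1 h2 h3 h4
    · obtain ⟨h1, h2, h3, h4⟩ := hpw' ⟨s.1, lt_of_lt_of_le s.2 hcm⟩ ⟨r.1, lt_of_lt_of_le r.2 hcm⟩ h
      rw [Set.inter_comm]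
      exact hdisj _ _ h1 h2 h3 h4
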